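/- In an ordered groupoid, if the pseudoproducts x ⊗ (y ⊗ z) and (x ⊗ y) ⊗ z both exist, then they are equal. -/
import Mathlib


/-- An algebraic groupoid: a type with an everywhere-defined multiplication which is
only required to behave well on composable pairs (`d x = r y`), together with
inversion and domain/range maps (valued in the identities of the groupoid). -/
class Groupoid' (G : Type*) where
  mul : G → G → G
  inv : G → G
  d : G → G
  r : G → G
  r_d : ∀ x : G, r (d x) = d x
  d_r : ∀ x : G, d (r x) = r x
  mul_assoc : ∀ x y z : G, d x = r y → d y = r z → mul (mul x y) z = mul x (mul y z)
  d_mul : ∀ x y : G, d x = r y → d (mul x y) = d y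
  r_mul : ∀ x y : G, d x = r y → r (mul x y) = r x
  mul_d : ∀ x : G, mul x (d x) = x
  r_mul_cancel : ∀ x : G, mul (r x) x = x
  mul_inv : ∀ x : G, mul x (inv x) = r x
  inv_mul : ∀ x : G, mul (inv x) x = d x
  d_inv : ∀ x : G, d (inv x) = r x
  r_inv : ∀ x : G, r (inv x) = d x

open Groupoid'
open scoped Classical

/-- An element is an identity of the groupoid if it is its own domain. -/
def IsId {G : Type*} [Groupoid' G] (e : G) : Prop := d e = e

/-- An ordered groupoid: axioms (OG1), (OG2) and (OG3) (restriction exists uniquely). -/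
class OrderedGroupoid (G : Type*) [Groupoid' G] [PartialOrder G] : Prop where
  og1 : ∀ x y : G, x ≤ y → inv x ≤ inv y
  og2 : ∀ x y u v : G, x ≤ y → u ≤ v → d x = r u → d y = r v → mul x u ≤ mul y v
  og3 : ∀ x e : G, IsId e → e ≤ d x → ∃! z : G, z ≤ x ∧ d z = e


/-- The restriction `(x | e)` of `x` to an identity `e ≤ d x`: the unique element
below `x` with domain `e` (junk value `x` if undefined). -/
noncomputable def res {G : Type*} [Groupoid' G] [PartialOrder G] [OrderedGroupoid G]
    (x e : G) : G :=
  if h : IsId e ∧ e ≤ d x then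
    Classical.choose (OrderedGroupoid.og3 x e h.1 h.2).exists
  else x

/-- The corestriction `(e | x)` of `x` to an identity `e ≤ r x`. -/
noncomputable def cores {G : Type*} [Groupoid' G] [PartialOrder G] [OrderedGroupoid G]
    (e x : G) : G :=
  inv (res (inv x) e)


/-- `e` is the meet of the identities `a` and `b` in the poset of identities. -/
def IsMeetId {G : Type*} [Groupoid' G] [PartialOrder G] (e a b : G) : Prop :=
  IsId e ∧ e ≤ a ∧ e ≤ b ∧ ∀ f : G, IsId f → f ≤ a → f ≤ b → f ≤ e

/-- The pseudoproduct `x ⊗ y` is defined when `d x ∧ r y` exists. -/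
def PsDefined {G : Type*} [Groupoid' G] [PartialOrder G] (x y : G) : Prop :=
  ∃ e : G, IsMeetId e (d x) (r y)

/-- The pseudoproduct `x ⊗ y = (x | e)(e | y)` where `e = d x ∧ r y`
(junk value `x` when undefined). -/
noncomputable def pseudo {G : Type*} [Groupoid' G] [PartialOrder G] [OrderedGroupoid G]
    (x y : G) : G :=
  if h : PsDefined x y then
    mul (res x (Classical.choose h)) (cores (Classical.choose h) y)
  else x

section Helpers

variable {G : Type*} [Groupoid' G] [PartialOrder G] [OrderedGroupoid G]

lemma isId_r (x : G) : IsId (r x) := d_r x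

lemma isId_d (x : G) : IsId (d x) := by unfold IsId; rw [← r_d x, d_r]

lemma d_mono {x y : G} (h : x ≤ y) : d x ≤ d y := by
  have := OrderedGroupoid.og2 (inv x) (inv y) x y (OrderedGroupoid.og1 x y h) h (d_inv x) (d_inv y)
  rwa [inv_mul, inv_mul] at this

lemma r_mono {x y : G} (h : x ≤ y) : r x ≤ r y := by
  have := OrderedGroupoid.og2 x y (inv x) (inv y) h (OrderedGroupoid.og1 x y h)
    (r_inv x).symm (r_inv y).symm
  rwa [Groupoid'.mul_inv, Groupoid'.mul_inv] at this

lemma mul_left_cancel' (a b c : G) (hb : d a = r b) (hc : d a = r c)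
    (h : mul a b = mul a c) : b = c := by
  have hb' : mul (inv a) (mul a b) = b := by
    rw [← mul_assoc (inv a) a b (d_inv a) hb, inv_mul, hb, r_mul_cancel]
  have hc' : mul (inv a) (mul a c) = c := by
    rw [← mul_assoc (inv a) a c (d_inv a) hc, inv_mul, hc, r_mul_cancel]
  rw [← hb', ← hc', h]

lemma inv_inv' (x : G) : inv (inv x) = x := by
  apply mul_left_cancel' (inv x) _ _ (r_inv (inv x)).symm (d_inv x)
  rw [Groupoid'.mul_inv, Groupoid'.inv_mul, Groupoid'.r_inv]

lemma res_le (x e : G) (he : IsId e) (hle : e ≤ d x) : res x e ≤ x := by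
  unfold res; rw [dif_pos ⟨he, hle⟩]
  exact (Classical.choose_spec (OrderedGroupoid.og3 x e he hle).exists).1

lemma d_res (x e : G) (he : IsId e) (hle : e ≤ d x) : d (res x e) = e := by
  unfold res; rw [dif_pos ⟨he, hle⟩]
  exact (Classical.choose_spec (OrderedGroupoid.og3 x e he hle).exists).2

lemma res_unique {x e z : G} (he : IsId e) (hle : e ≤ d x) (hz : z ≤ x) (hd : d z = e) :
    z = res x e :=
  (OrderedGroupoid.og3 x e he hle).unique ⟨hz, hd⟩ ⟨res_le x e he hle, d_res x e he hle⟩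

lemma cores_le (e x : G) (he : IsId e) (hle : e ≤ r x) : cores e x ≤ x := by
  unfold cores
  have h1 : res (inv x) e ≤ inv x := res_le _ e he (by rwa [d_inv])
  have h2 := OrderedGroupoid.og1 _ _ h1
  rwa [inv_inv'] at h2

lemma r_cores (e x : G) (he : IsId e) (hle : e ≤ r x) : r (cores e x) = e := by
  unfold cores; rw [r_inv, d_res _ e he (by rwa [d_inv])]

lemma cores_unique {e x z : G} (he : IsId e) (hle : e ≤ r x) (hz : z ≤ x) (hr : r z = e) :
    z = cores e x := by
  have h1 : inv z = res (inv x) e :=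
    res_unique he (by rwa [d_inv]) (OrderedGroupoid.og1 _ _ hz) (by rwa [d_inv])
  unfold cores; rw [← h1, inv_inv']

lemma le_of_d_le {y w1 w2 : G} (h1 : w1 ≤ y) (h2 : w2 ≤ y) (hd : d w1 ≤ d w2) : w1 ≤ w2 := by
  have hid : IsId (d w1) := isId_d w1
  have h3 : res w2 (d w1) ≤ w2 := res_le w2 (d w1) hid hd
  calc w1 = res y (d w1) := res_unique hid (hd.trans (d_mono h2)) h1 rfl
    _ = res w2 (d w1) :=
      (res_unique hid (hd.trans (d_mono h2)) (h3.trans h2) (d_res w2 (d w1) hid hd)).symm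
    _ ≤ w2 := h3

lemma le_of_r_le {y w1 w2 : G} (h1 : w1 ≤ y) (h2 : w2 ≤ y) (hr : r w1 ≤ r w2) : w1 ≤ w2 := by
  have h3 := le_of_d_le (y := inv y) (OrderedGroupoid.og1 _ _ h1) (OrderedGroupoid.og1 _ _ h2)
    (by rwa [d_inv, d_inv])
  have h4 := OrderedGroupoid.og1 _ _ h3
  rwa [inv_inv', inv_inv'] at h4

lemma res_res {x e f : G} (he : IsId e) (hf : IsId f) (hfe : f ≤ e) (hed : e ≤ d x) :
    res (res x e) f = res x f :=
  (res_unique hf (hfe.trans hed)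
    ((res_le (res x e) f hf (by rw [d_res x e he hed]; exact hfe)).trans (res_le x e he hed))
    (d_res (res x e) f hf (by rw [d_res x e he hed]; exact hfe)))

lemma cores_cores {z g h : G} (hg : IsId g) (hh : IsId h) (hgh : g ≤ h) (hhr : h ≤ r z) :
    cores g (cores h z) = cores g z :=
  (cores_unique hg (hgh.trans hhr)
    ((cores_le g (cores h z) hg (by rw [r_cores h z hh hhr]; exact hgh)).trans (cores_le h z hh hhr))
    (r_cores g (cores h z) hg (by rw [r_cores h z hh hhr]; exact hgh)))

lemma res_mul {u v g : G} (huv : d u = r v) (hg : IsId g) (hgv : g ≤ d v) :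
    res (mul u v) g = mul (res u (r (res v g))) (res v g) := by
  have hv'le : res v g ≤ v := res_le v g hg hgv
  have hrv' : r (res v g) ≤ d u := by rw [huv]; exact r_mono hv'le
  have hu' : res u (r (res v g)) ≤ u := res_le u _ (isId_r _) hrv'
  have hdu' : d (res u (r (res v g))) = r (res v g) := d_res u _ (isId_r _) hrv'
  have hle : mul (res u (r (res v g))) (res v g) ≤ mul u v :=
    OrderedGroupoid.og2 _ _ _ _ hu' hv'le hdu' huv
  have hd : d (mul (res u (r (res v g))) (res v g)) = g := by
    rw [d_mul _ _ hdu', d_res v g hg hgv]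
  exact (res_unique hg (by rw [d_mul u v huv]; exact hgv) hle hd).symm

lemma cores_mul {u v g : G} (huv : d u = r v) (hg : IsId g) (hgu : g ≤ r u) :
    cores g (mul u v) = mul (cores g u) (cores (d (cores g u)) v) := by
  have hu'le : cores g u ≤ u := cores_le g u hg hgu
  have hdu' : d (cores g u) ≤ r v := by rw [← huv]; exact d_mono hu'le
  have hv' : cores (d (cores g u)) v ≤ v := cores_le _ v (isId_d _) hdu'
  have hrv' : r (cores (d (cores g u)) v) = d (cores g u) := r_cores _ v (isId_d _) hdu'
  have hle : mul (cores g u) (cores (d (cores g u)) v) ≤ mul u v :=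
    OrderedGroupoid.og2 _ _ _ _ hu'le hv' hrv'.symm huv
  have hr : r (mul (cores g u) (cores (d (cores g u)) v)) = g := by
    rw [r_mul _ _ hrv'.symm, r_cores g u hg hgu]
  exact (cores_unique hg (by rw [r_mul u v huv]; exact hgu) hle hr).symm

lemma meet_unique {e f a b : G} (he : IsMeetId e a b) (hf : IsMeetId f a b) : e = f :=
  le_antisymm (hf.2.2.2 e he.1 he.2.1 he.2.2.1) (he.2.2.2 f hf.1 hf.2.1 hf.2.2.1)

lemma pseudo_eq {x y e : G} (h : IsMeetId e (d x) (r y)) :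
    pseudo x y = mul (res x e) (cores e y) := by
  have hd : PsDefined x y := ⟨e, h⟩
  unfold pseudo
  rw [dif_pos hd, meet_unique (Classical.choose_spec hd) h]

end Helpers

theorem stmt15 {G : Type*} [Groupoid' G] [PartialOrder G] [OrderedGroupoid G]
    (x y z : G)
    (h1 : PsDefined y z) (h2 : PsDefined x (pseudo y z))
    (h3 : PsDefined x y) (h4 : PsDefined (pseudo x y) z) :
    pseudo x (pseudo y z) = pseudo (pseudo x y) z := by
  obtain ⟨e1, me1⟩ := h1
  obtain ⟨e2, me2⟩ := h2
  obtain ⟨e3, me3⟩ := h3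
  obtain ⟨e4, me4⟩ := h4
  have pyz := pseudo_eq me1
  have pxy := pseudo_eq me3
  have lhs := pseudo_eq me2
  have rhs := pseudo_eq me4
  obtain ⟨he1, he1y, he1z, he1m⟩ := me1
  obtain ⟨he2, he2x, he2u, he2m⟩ := me2
  obtain ⟨he3, he3x, he3y, he3m⟩ := me3
  obtain ⟨he4, he4u, he4z, he4m⟩ := me4
  -- components
  have hry1le : res y e1 ≤ y := res_le y e1 he1 he1y
  have hdry1 : d (res y e1) = e1 := d_res y e1 he1 he1y
  have hcz1le : cores e1 z ≤ z := cores_le e1 z he1 he1z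
  have hrcz1 : r (cores e1 z) = e1 := r_cores e1 z he1 he1z
  have hcy3le : cores e3 y ≤ y := cores_le e3 y he3 he3y
  have hrcy3 : r (cores e3 y) = e3 := r_cores e3 y he3 he3y
  have hrx3le : res x e3 ≤ x := res_le x e3 he3 he3x
  have hdrx3 : d (res x e3) = e3 := d_res x e3 he3 he3x
  have hcomp1 : d (res y e1) = r (cores e1 z) := by rw [hdry1, hrcz1]
  have hcomp3 : d (res x e3) = r (cores e3 y) := by rw [hdrx3, hrcy3]
  have hrpyz : r (pseudo y z) = r (res y e1) := by rw [pyz, r_mul _ _ hcomp1]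
  have hdpxy : d (pseudo x y) = d (cores e3 y) := by rw [pxy, d_mul _ _ hcomp3]
  have he2u' : e2 ≤ r (res y e1) := hrpyz ▸ he2u
  have he4u' : e4 ≤ d (cores e3 y) := hdpxy ▸ he4u
  -- the two middle factors
  set m1 := cores e2 (res y e1) with hm1
  set m2 := res (cores e3 y) e4 with hm2
  have m1le : m1 ≤ res y e1 := cores_le e2 _ he2 he2u'
  have m1y : m1 ≤ y := m1le.trans hry1le
  have rm1 : r m1 = e2 := r_cores e2 _ he2 he2u'
  have m2le : m2 ≤ cores e3 y := res_le _ e4 he4 he4u'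
  have m2y : m2 ≤ y := m2le.trans hcy3le
  have dm2 : d m2 = e4 := d_res _ e4 he4 he4u'
  have dm1e1 : d m1 ≤ e1 := hdry1 ▸ d_mono m1le
  have e2e3 : e2 ≤ e3 := he3m e2 he2 he2x (he2u'.trans (r_mono hry1le))
  have m1cy3 : m1 ≤ cores e3 y :=
    le_of_r_le m1y hcy3le (by rw [rm1, hrcy3]; exact e2e3)
  have dm1e4 : d m1 ≤ e4 :=
    he4m (d m1) (isId_d m1) (hdpxy ▸ d_mono m1cy3) (dm1e1.trans he1z)
  have m1m2 : m1 ≤ m2 := le_of_d_le m1y m2y (by rw [dm2]; exact dm1e4)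
  have e4e1 : e4 ≤ e1 := he1m e4 he4 ((he4u'.trans (d_mono hcy3le))) he4z
  have m2ry1 : m2 ≤ res y e1 := le_of_d_le m2y hry1le (by rw [dm2, hdry1]; exact e4e1)
  have rm2e2 : r m2 ≤ e2 :=
    he2m (r m2) (isId_r m2) ((hrcy3 ▸ r_mono m2le).trans he3x) (hrpyz ▸ r_mono m2ry1)
  have m2m1 : m2 ≤ m1 := le_of_r_le m2y m1y (by rw [rm1]; exact rm2e2)
  have m12 : m1 = m2 := le_antisymm m1m2 m2m1
  have dm1 : d m1 = e4 := by rw [m12, dm2]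
  have rm2 : r m2 = e2 := by rw [← m12, rm1]
  -- expand LHS
  have lhs2 : cores e2 (pseudo y z) = mul m1 (cores e4 z) := by
    rw [pyz, cores_mul hcomp1 he2 he2u', ← hm1, cores_cores (isId_d m1) he1 dm1e1 he1z, dm1]
  -- expand RHS
  have rhs2 : res (pseudo x y) e4 = mul (res x e2) m2 := by
    rw [pxy, res_mul hcomp3 he4 he4u', ← hm2,
      res_res he3 (isId_r m2) (rm2e2.trans e2e3) he3x, rm2]
  rw [lhs, rhs, lhs2, rhs2, m12]
  exact (mul_assoc _ _ _ (by rw [d_res x e2 he2 he2x, ← rm2]) (by rw [dm2, r_cores e4 z he4 he4z])).symm
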